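/- Let M and H be n×n real symmetric positive definite matrices. Then ‖M^{1/2} − H‖_F ≤ (n^{1/2} ‖M − H²‖_F)^{1/2}, and ‖M^{1/2} − H‖₂ ≤ min( ‖M − H²‖₂ / √(λ_min(M)), (n^{1/2} ‖M − H²‖_F)^{1/2} ), where λ_min(M) is the smallest eigenvalue of M. (This is Lemma 'forward' of the paper with M = W^β for β = ±1.) -/

import Mathlib

open Matrix

/-- The Frobenius norm of a real matrix. -/
noncomputable def frobNorm {n m : ℕ} (M : Matrix (Fin n) (Fin m) ℝ) : ℝ :=
  Real.sqrt (∑ i, ∑ j, (M i j) ^ 2)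

/-- The spectral norm (largest singular value) of a real square matrix. -/
noncomputable def specNorm {n : ℕ} (M : Matrix (Fin n) (Fin n) ℝ) : ℝ :=
  ⨆ i, Real.sqrt ((show (Mᵀ * M).IsHermitian by
    simpa using Matrix.isHermitian_conjTranspose_mul_self M).eigenvalues i)

/-- The square root of a positive semidefinite matrix (as in Mathlib of December 2024). -/
noncomputable def Matrix.PosSemidef.sqrt {n : Type*} [Fintype n] [DecidableEq n]
    {A : Matrix n n ℝ} (hA : A.PosSemidef) : Matrix n n ℝ :=
  hA.1.eigenvectorUnitary.1 * diagonal ((↑) ∘ (√·) ∘ hA.1.eigenvalues) *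
    (star hA.1.eigenvectorUnitary : Matrix n n ℝ)

/-- The smallest eigenvalue of a real symmetric matrix. -/
noncomputable def lambdaMin {n : ℕ} {M : Matrix (Fin n) (Fin n) ℝ}
    (hM : M.IsHermitian) : ℝ :=
  ⨅ i, hM.eigenvalues i

theorem Matrix.isHermitian_transpose_mul_self {n : ℕ} (M : Matrix (Fin n) (Fin n) ℝ) :
    (Mᵀ * M).IsHermitian := by
  simpa using Matrix.isHermitian_conjTranspose_mul_self M

namespace ForwardAux

variable {n : ℕ}

/-- Squared Frobenius norm. -/
noncomputable def frobSq (A : Matrix (Fin n) (Fin n) ℝ) : ℝ := ∑ i, ∑ j, (A i j) ^ 2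

lemma frobNorm_eq (A : Matrix (Fin n) (Fin n) ℝ) : frobNorm A = Real.sqrt (frobSq A) := rfl

lemma frobSq_nonneg (A : Matrix (Fin n) (Fin n) ℝ) : 0 ≤ frobSq A := by
  apply Finset.sum_nonneg; intro i _; apply Finset.sum_nonneg; intro j _; positivity

lemma star_eq_transpose (U : Matrix (Fin n) (Fin n) ℝ) : star U = Uᵀ := by
  ext i j; simp [conjTranspose_apply]

lemma dot_mulVec_left (U : Matrix (Fin n) (Fin n) ℝ) (x z : Fin n → ℝ) :
    x ⬝ᵥ (U *ᵥ z) = (star U *ᵥ x) ⬝ᵥ z := by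
  rw [dotProduct_mulVec]; congr 1; ext i
  simp [vecMul, mulVec, dotProduct, conjTranspose_apply, mul_comm]

lemma unitary_dot (U : Matrix (Fin n) (Fin n) ℝ)
    (d : Fin n → ℝ) (x : Fin n → ℝ) :
    x ⬝ᵥ ((U * diagonal d * star U) *ᵥ x) = ∑ i, d i * ((star U *ᵥ x) i) ^ 2 := by
  rw [← mulVec_mulVec, ← mulVec_mulVec, dot_mulVec_left]
  simp [mulVec_diagonal, dotProduct]
  ring_nf
  congr 1; ext i; ring

lemma unitary_dot_self (U : Matrix (Fin n) (Fin n) ℝ) (hU : U ∈ Matrix.unitaryGroup (Fin n) ℝ)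
    (x : Fin n → ℝ) :
    x ⬝ᵥ x = ∑ i, ((star U *ᵥ x) i) ^ 2 := by
  have h1 : U * star U = 1 := (mem_unitaryGroup_iff).mp hU
  calc x ⬝ᵥ x = x ⬝ᵥ ((U * star U) *ᵥ x) := by rw [h1, one_mulVec]
    _ = (star U *ᵥ x) ⬝ᵥ (star U *ᵥ x) := by rw [← mulVec_mulVec, dot_mulVec_left]
    _ = ∑ i, ((star U *ᵥ x) i) ^ 2 := by simp [dotProduct, sq]

lemma rayleigh_le' (U : Matrix (Fin n) (Fin n) ℝ) (hU : U ∈ Matrix.unitaryGroup (Fin n) ℝ)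
    (d : Fin n → ℝ) (x : Fin n → ℝ) (hx : x ⬝ᵥ x = 1) (c : ℝ) (hd : ∀ i, d i ≤ c) :
    x ⬝ᵥ ((U * diagonal d * star U) *ᵥ x) ≤ c := by
  rw [unitary_dot]
  calc ∑ i, d i * ((star U *ᵥ x) i) ^ 2 ≤ ∑ i, c * ((star U *ᵥ x) i) ^ 2 := by
        apply Finset.sum_le_sum; intro i _
        exact mul_le_mul_of_nonneg_right (hd i) (sq_nonneg _)
    _ = c := by rw [← Finset.mul_sum, ← unitary_dot_self U hU x, hx, mul_one]

lemma rayleigh_ge' (U : Matrix (Fin n) (Fin n) ℝ) (hU : U ∈ Matrix.unitaryGroup (Fin n) ℝ)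
    (d : Fin n → ℝ) (x : Fin n → ℝ) (hx : x ⬝ᵥ x = 1) (c : ℝ) (hd : ∀ i, c ≤ d i) :
    c ≤ x ⬝ᵥ ((U * diagonal d * star U) *ᵥ x) := by
  rw [unitary_dot]
  calc c = ∑ i, c * ((star U *ᵥ x) i) ^ 2 := by
        rw [← Finset.mul_sum, ← unitary_dot_self U hU x, hx, mul_one]
    _ ≤ ∑ i, d i * ((star U *ᵥ x) i) ^ 2 := by
        apply Finset.sum_le_sum; intro i _
        exact mul_le_mul_of_nonneg_right (hd i) (sq_nonneg _)

lemma spec_real (A : Matrix (Fin n) (Fin n) ℝ) (hA : A.IsHermitian) :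
    A = (hA.eigenvectorUnitary : Matrix (Fin n) (Fin n) ℝ) * diagonal hA.eigenvalues
      * star (hA.eigenvectorUnitary : Matrix (Fin n) (Fin n) ℝ) := by
  conv_lhs => rw [hA.spectral_theorem, Unitary.conjStarAlgAut_apply]
  rfl

lemma sqrt_real (M : Matrix (Fin n) (Fin n) ℝ) (hM : M.PosSemidef) :
    hM.sqrt = (hM.1.eigenvectorUnitary : Matrix (Fin n) (Fin n) ℝ)
      * diagonal (fun i => Real.sqrt (hM.1.eigenvalues i))
      * star (hM.1.eigenvectorUnitary : Matrix (Fin n) (Fin n) ℝ) := by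
  rw [Matrix.PosSemidef.sqrt]; congr 1

lemma eigvec_unit (A : Matrix (Fin n) (Fin n) ℝ) (hA : A.IsHermitian) (i : Fin n) :
    ⇑(hA.eigenvectorBasis i) ⬝ᵥ ⇑(hA.eigenvectorBasis i) = 1 := by
  have h := (Matrix.mem_unitaryGroup_iff').mp (hA.eigenvectorUnitary).2
  have := congrFun (congrFun h i) i
  simpa [Matrix.mul_apply, conjTranspose_apply, Matrix.one_apply, dotProduct,
    hA.eigenvectorUnitary_apply] using this

lemma eig_eq_dot (A : Matrix (Fin n) (Fin n) ℝ) (hA : A.IsHermitian) (i : Fin n) :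
    hA.eigenvalues i = ⇑(hA.eigenvectorBasis i) ⬝ᵥ (A *ᵥ ⇑(hA.eigenvectorBasis i)) := by
  rw [hA.mulVec_eigenvectorBasis, dotProduct_smul, eigvec_unit A hA i]
  simp

lemma herm_sq (A : Matrix (Fin n) (Fin n) ℝ) (hA : A.IsHermitian) :
    A * A = (hA.eigenvectorUnitary : Matrix (Fin n) (Fin n) ℝ)
      * diagonal (fun i => (hA.eigenvalues i) ^ 2)
      * star (hA.eigenvectorUnitary : Matrix (Fin n) (Fin n) ℝ) := by
  set U := (hA.eigenvectorUnitary : Matrix (Fin n) (Fin n) ℝ)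
  have hU : star U * U = 1 := (mem_unitaryGroup_iff').mp (hA.eigenvectorUnitary).2
  conv_lhs => rw [spec_real A hA]
  calc (U * diagonal hA.eigenvalues * star U) * (U * diagonal hA.eigenvalues * star U)
      = U * (diagonal hA.eigenvalues * ((star U * U) * diagonal hA.eigenvalues)) * star U := by
        simp only [Matrix.mul_assoc]
    _ = U * diagonal (fun i => (hA.eigenvalues i) ^ 2) * star U := by
        rw [hU, Matrix.one_mul, diagonal_mul_diagonal]
        simp only [Matrix.mul_assoc]
        congr 2
        ext i; ring

lemma frobSq_eq_trace (A : Matrix (Fin n) (Fin n) ℝ) : frobSq A = Matrix.trace (star A * A) := by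
  rw [star_eq_transpose]
  simp [frobSq, Matrix.trace, Matrix.diag, Matrix.mul_apply, sq]
  rw [Finset.sum_comm]

lemma frobSq_conj (U : Matrix (Fin n) (Fin n) ℝ) (hU : U ∈ Matrix.unitaryGroup (Fin n) ℝ)
    (R : Matrix (Fin n) (Fin n) ℝ) : frobSq (star U * R * U) = frobSq R := by
  have h1 : U * star U = 1 := (mem_unitaryGroup_iff).mp hU
  rw [frobSq_eq_trace, frobSq_eq_trace]
  have : star (star U * R * U) * (star U * R * U) = star U * (star R * R) * U := by
    simp only [Matrix.star_mul, star_star, Matrix.mul_assoc]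
    rw [← Matrix.mul_assoc U (star U), h1, Matrix.one_mul]
  rw [this, Matrix.trace_mul_cycle, ← Matrix.mul_assoc, h1, Matrix.one_mul]

lemma sum_eig_eq_trace (A : Matrix (Fin n) (Fin n) ℝ) (hA : A.IsHermitian) :
    ∑ i, hA.eigenvalues i = Matrix.trace A := by
  set U := (hA.eigenvectorUnitary : Matrix (Fin n) (Fin n) ℝ)
  have hU : star U * U = 1 := (mem_unitaryGroup_iff').mp (hA.eigenvectorUnitary).2
  conv_rhs => rw [spec_real A hA]
  rw [Matrix.trace_mul_cycle, hU, Matrix.one_mul, Matrix.trace_diagonal]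

lemma frobSq_diagonal (d : Fin n → ℝ) : frobSq (diagonal d) = ∑ i, d i ^ 2 := by
  unfold frobSq
  apply Finset.sum_congr rfl
  intro i _
  rw [Finset.sum_eq_single i] <;> simp +contextual [diagonal_apply, eq_comm]

lemma frobSq_spectral (A : Matrix (Fin n) (Fin n) ℝ) (hA : A.IsHermitian) :
    frobSq A = ∑ i, (hA.eigenvalues i) ^ 2 := by
  set U := (hA.eigenvectorUnitary : Matrix (Fin n) (Fin n) ℝ)
  have hUm : U ∈ Matrix.unitaryGroup (Fin n) ℝ := (hA.eigenvectorUnitary).2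
  have hU : star U * U = 1 := (mem_unitaryGroup_iff').mp hUm
  have h2 : star U * A * U = diagonal hA.eigenvalues := by
    conv_lhs => rw [spec_real A hA]
    calc star U * (U * diagonal hA.eigenvalues * star U) * U
        = (star U * U) * diagonal hA.eigenvalues * (star U * U) := by
          simp only [Matrix.mul_assoc]
      _ = diagonal hA.eigenvalues := by rw [hU, Matrix.one_mul, Matrix.mul_one]
  have h3 := frobSq_conj U hUm A
  rw [h2, frobSq_diagonal] at h3
  exact h3.symm

lemma diag_sq_le_frobSq (B : Matrix (Fin n) (Fin n) ℝ) :
    ∑ i, (B i i) ^ 2 ≤ frobSq B := by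
  apply Finset.sum_le_sum
  intro i _
  exact Finset.single_le_sum (fun j _ => sq_nonneg (B i j)) (Finset.mem_univ i)

lemma conj_diag_entry (A R : Matrix (Fin n) (Fin n) ℝ) (hA : A.IsHermitian) (i : Fin n) :
    (star (hA.eigenvectorUnitary : Matrix (Fin n) (Fin n) ℝ) * R
      * (hA.eigenvectorUnitary : Matrix (Fin n) (Fin n) ℝ)) i i
      = ⇑(hA.eigenvectorBasis i) ⬝ᵥ (R *ᵥ ⇑(hA.eigenvectorBasis i)) := by
  simp only [Matrix.mul_apply, mulVec, dotProduct, Matrix.star_apply, star_trivial,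
    hA.eigenvectorUnitary_apply, Finset.sum_mul, Finset.mul_sum]
  rw [Finset.sum_comm]
  apply Finset.sum_congr rfl
  intro k _
  apply Finset.sum_congr rfl
  intro l _
  ring

lemma psd_ct_mul_self (A : Matrix (Fin n) (Fin n) ℝ) : (Aᴴ * A).PosSemidef :=
  posSemidef_conjTranspose_mul_self A

lemma specNorm_nonneg (A : Matrix (Fin n) (Fin n) ℝ) : 0 ≤ specNorm A :=
  Real.iSup_nonneg fun i => Real.sqrt_nonneg _

lemma specNorm_le (A : Matrix (Fin n) (Fin n) ℝ) (c : ℝ) (hc : 0 ≤ c)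
    (h : ∀ i, Real.sqrt ((Matrix.isHermitian_transpose_mul_self A).eigenvalues i) ≤ c) :
    specNorm A ≤ c :=
  Real.iSup_le h hc

lemma sqrt_eig_le_specNorm (A : Matrix (Fin n) (Fin n) ℝ) (i : Fin n) :
    Real.sqrt ((Matrix.isHermitian_transpose_mul_self A).eigenvalues i) ≤ specNorm A := by
  unfold specNorm
  exact le_ciSup (f := fun i =>
    Real.sqrt ((Matrix.isHermitian_transpose_mul_self A).eigenvalues i))
    (Set.Finite.bddAbove (Set.finite_range _)) i

lemma eig_le_specNorm_sq (A : Matrix (Fin n) (Fin n) ℝ) (i : Fin n) :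
    (Matrix.isHermitian_transpose_mul_self A).eigenvalues i ≤ specNorm A ^ 2 := by
  have h0 : 0 ≤ (Matrix.isHermitian_transpose_mul_self A).eigenvalues i :=
    (psd_ct_mul_self A).eigenvalues_nonneg i
  have := sqrt_eig_le_specNorm A i
  nlinarith [Real.sq_sqrt h0,
    Real.sqrt_nonneg ((Matrix.isHermitian_transpose_mul_self A).eigenvalues i)]

lemma dotsq_le_specNorm_sq (A : Matrix (Fin n) (Fin n) ℝ) (x : Fin n → ℝ) (hx : x ⬝ᵥ x = 1) :
    x ⬝ᵥ ((Aᴴ * A) *ᵥ x) ≤ specNorm A ^ 2 := by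
  have hH := Matrix.isHermitian_transpose_mul_self A
  rw [conjTranspose_eq_transpose_of_trivial]
  rw [spec_real _ hH]
  exact rayleigh_le' _ (hH.eigenvectorUnitary).2 _ x hx _ (eig_le_specNorm_sq A)

lemma dot_le_specNorm (A : Matrix (Fin n) (Fin n) ℝ) (x : Fin n → ℝ) (hx : x ⬝ᵥ x = 1) :
    |x ⬝ᵥ (A *ᵥ x)| ≤ specNorm A := by
  have h1 : (x ⬝ᵥ (A *ᵥ x)) ^ 2 ≤ (x ⬝ᵥ x) * ((A *ᵥ x) ⬝ᵥ (A *ᵥ x)) := by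
    simpa [dotProduct, sq] using
      Finset.sum_mul_sq_le_sq_mul_sq Finset.univ x (A *ᵥ x)
  have h2 : (A *ᵥ x) ⬝ᵥ (A *ᵥ x) = x ⬝ᵥ ((Aᴴ * A) *ᵥ x) := by
    rw [← mulVec_mulVec, dot_mulVec_left, dotProduct_comm, Matrix.star_eq_conjTranspose,
      mulVec_mulVec]
  have h3 := dotsq_le_specNorm_sq A x hx
  have h4 : (x ⬝ᵥ (A *ᵥ x)) ^ 2 ≤ specNorm A ^ 2 := by
    rw [hx, one_mul] at h1; rw [h2] at h1; linarith
  calc |x ⬝ᵥ (A *ᵥ x)| = Real.sqrt ((x ⬝ᵥ (A *ᵥ x)) ^ 2) := (Real.sqrt_sq_eq_abs _).symm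
    _ ≤ Real.sqrt (specNorm A ^ 2) := Real.sqrt_le_sqrt h4
    _ = specNorm A := Real.sqrt_sq (specNorm_nonneg A)

lemma specNorm_le_bound (A : Matrix (Fin n) (Fin n) ℝ) (hA : A.IsHermitian) (b : ℝ)
    (hb : 0 ≤ b) (h : ∀ i, |hA.eigenvalues i| ≤ b) : specNorm A ≤ b := by
  apply specNorm_le A b hb
  intro i
  have key : Aᴴ * A = (hA.eigenvectorUnitary : Matrix (Fin n) (Fin n) ℝ)
      * diagonal (fun i => (hA.eigenvalues i) ^ 2)
      * star (hA.eigenvectorUnitary : Matrix (Fin n) (Fin n) ℝ) := by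
    rw [hA.eq]; exact herm_sq A hA
  rw [conjTranspose_eq_transpose_of_trivial] at key
  have h1 : (Matrix.isHermitian_transpose_mul_self A).eigenvalues i ≤ b ^ 2 := by
    have hvu := eigvec_unit _ (Matrix.isHermitian_transpose_mul_self A) i
    rw [eig_eq_dot _ (Matrix.isHermitian_transpose_mul_self A) i]
    set v := ⇑((Matrix.isHermitian_transpose_mul_self A).eigenvectorBasis i) with hv
    rw [key]
    apply rayleigh_le' _ (hA.eigenvectorUnitary).2 _ _ hvu
    intro j
    have := h j
    nlinarith [abs_nonneg (hA.eigenvalues j), sq_abs (hA.eigenvalues j)]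
  calc Real.sqrt ((Matrix.isHermitian_transpose_mul_self A).eigenvalues i)
      ≤ Real.sqrt (b ^ 2) := Real.sqrt_le_sqrt h1
    _ = b := Real.sqrt_sq hb

lemma specNorm_le_frobNorm (A : Matrix (Fin n) (Fin n) ℝ) : specNorm A ≤ frobNorm A := by
  apply specNorm_le A _ (Real.sqrt_nonneg _)
  intro i
  apply Real.sqrt_le_sqrt
  calc (Matrix.isHermitian_transpose_mul_self A).eigenvalues i
      ≤ ∑ j, (Matrix.isHermitian_transpose_mul_self A).eigenvalues j :=
        Finset.single_le_sum (fun j _ => (psd_ct_mul_self A).eigenvalues_nonneg j)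
          (Finset.mem_univ i)
    _ = Matrix.trace (Aᴴ * A) := sum_eig_eq_trace _ _
    _ = frobSq A := by rw [frobSq_eq_trace, Matrix.star_eq_conjTranspose]

end ForwardAux

theorem forward_error {n : ℕ} (M H : Matrix (Fin n) (Fin n) ℝ)
    (hM : M.PosDef) (hH : H.PosDef) :
    frobNorm (hM.posSemidef.sqrt - H) ≤ Real.sqrt (Real.sqrt n * frobNorm (M - H ^ 2)) ∧
    specNorm (hM.posSemidef.sqrt - H) ≤
      min (specNorm (M - H ^ 2) / Real.sqrt (lambdaMin hM.1))
        (Real.sqrt (Real.sqrt n * frobNorm (M - H ^ 2))) := by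
  open ForwardAux in
  rcases Nat.eq_zero_or_pos n with h0 | hpos
  · subst h0
    constructor
    · simp [frobNorm]
    · simp [frobNorm, specNorm, Real.iSup_of_isEmpty]
  have hne : Nonempty (Fin n) := Fin.pos_iff_nonempty.mp hpos
  set S := hM.posSemidef.sqrt with hSdef
  set E := S - H with hEdef
  set R := M - H ^ 2 with hRdef
  have hS : S.PosSemidef := by
    rw [hSdef, sqrt_real M hM.posSemidef, Matrix.star_eq_conjTranspose]
    apply PosSemidef.mul_mul_conjTranspose_same
    exact posSemidef_diagonal_iff.mpr fun i => Real.sqrt_nonneg _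
  have hE : E.IsHermitian := hS.1.sub hH.1
  have h1 : S * S = M := by
    rw [hSdef, sqrt_real M hM.posSemidef]
    set U := (hM.1.eigenvectorUnitary : Matrix (Fin n) (Fin n) ℝ)
    have hU : star U * U = 1 := (mem_unitaryGroup_iff').mp (hM.1.eigenvectorUnitary).2
    calc (U * diagonal (fun i => Real.sqrt (hM.1.eigenvalues i)) * star U)
          * (U * diagonal (fun i => Real.sqrt (hM.1.eigenvalues i)) * star U)
        = U * (diagonal (fun i => Real.sqrt (hM.1.eigenvalues i)) * ((star U * U)
          * diagonal (fun i => Real.sqrt (hM.1.eigenvalues i)))) * star U := by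
          simp only [Matrix.mul_assoc]
      _ = U * diagonal hM.1.eigenvalues * star U := by
          rw [hU, Matrix.one_mul]
          simp only [diagonal_mul_diagonal]
          congr 2
          exact congrArg diagonal
            (funext fun i => Real.mul_self_sqrt (hM.posSemidef.eigenvalues_nonneg i))
      _ = M := (spec_real M hM.1).symm
  have h2 : S - E = H := sub_sub_cancel S H
  have hRE : R = S * E + E * S - E * E := by
    rw [hRdef, ← h1, ← h2, pow_two]
    noncomm_ring
  -- abbreviations
  set v : Fin n → (Fin n → ℝ) := fun i => ⇑(hE.eigenvectorBasis i) with hvdef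
  set ee : Fin n → ℝ := hE.eigenvalues with heedef
  set s : Fin n → ℝ := fun i => v i ⬝ᵥ (S *ᵥ v i) with hsdef
  set c : Fin n → ℝ := fun i => v i ⬝ᵥ (R *ᵥ v i) with hcdef
  have hunit : ∀ i, v i ⬝ᵥ v i = 1 := eigvec_unit E hE
  have hEv : ∀ i, E *ᵥ v i = ee i • v i := fun i => hE.mulVec_eigenvectorBasis i
  have hEstar : star E = E := by rw [Matrix.star_eq_conjTranspose, hE.eq]
  have hc_eq : ∀ i, c i = ee i * (2 * s i - ee i) := by
    intro i
    have t1 : v i ⬝ᵥ ((S * E) *ᵥ v i) = ee i * s i := by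
      rw [← mulVec_mulVec, hEv i, mulVec_smul, dotProduct_smul, hsdef]
      simp
    have t2 : v i ⬝ᵥ ((E * S) *ᵥ v i) = ee i * s i := by
      rw [← mulVec_mulVec, dot_mulVec_left, hEstar, hEv i, smul_dotProduct, hsdef]
      simp
    have t3 : v i ⬝ᵥ ((E * E) *ᵥ v i) = ee i * ee i := by
      rw [← mulVec_mulVec, hEv i, mulVec_smul, dotProduct_smul, hEv i, dotProduct_smul,
        hunit i]
      simp
    rw [hcdef]
    simp only
    rw [hRE, sub_mulVec, add_mulVec, dotProduct_sub, dotProduct_add, t1, t2, t3]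
    ring
  have hvne : ∀ i, v i ≠ 0 := by
    intro i h
    have := hunit i
    rw [h] at this
    simp at this
  have hsub : ∀ i, s i - ee i = v i ⬝ᵥ (H *ᵥ v i) := by
    intro i
    rw [← h2, sub_mulVec, dotProduct_sub, hEv i, dotProduct_smul, hunit i, hsdef]
    simp
  have hHpos : ∀ i, 0 < v i ⬝ᵥ (H *ᵥ v i) := by
    intro i
    have := hH.dotProduct_mulVec_pos (hvne i)
    simpa using this
  have hlt : ∀ i, ee i < s i := by
    intro i
    have := hHpos i
    rw [← hsub i] at this
    linarith
  have hs_ge : ∀ i, Real.sqrt (lambdaMin hM.1) ≤ s i := by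
    intro i
    have hray := rayleigh_ge' (hM.1.eigenvectorUnitary : Matrix (Fin n) (Fin n) ℝ)
      (hM.1.eigenvectorUnitary).2 (fun j => Real.sqrt (hM.1.eigenvalues j)) (v i) (hunit i)
      (Real.sqrt (lambdaMin hM.1))
      (fun j => Real.sqrt_le_sqrt (ciInf_le (Set.Finite.bddBelow (Set.finite_range _)) j))
    rw [← sqrt_real M hM.posSemidef] at hray
    exact hray
  have hs_nonneg : ∀ i, 0 ≤ s i := fun i => le_trans (Real.sqrt_nonneg _) (hs_ge i)
  have key1 : ∀ i, ee i ^ 2 ≤ |c i| := by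
    intro i
    rcases le_or_gt 0 (ee i) with he | he
    · have hcc : ee i ^ 2 ≤ c i := by rw [hc_eq i]; nlinarith [hlt i]
      exact hcc.trans (le_abs_self _)
    · have hcc : ee i ^ 2 ≤ -c i := by rw [hc_eq i]; nlinarith [hs_nonneg i]
      exact hcc.trans (neg_le_abs _)
  have key2 : ∀ i, |ee i| * Real.sqrt (lambdaMin hM.1) ≤ |c i| := by
    intro i
    have hge : Real.sqrt (lambdaMin hM.1) ≤ 2 * s i - ee i := by
      have := hs_ge i; have := hlt i; linarith
    have hnn : 0 ≤ 2 * s i - ee i := le_trans (Real.sqrt_nonneg _) hge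
    rw [hc_eq i, abs_mul, abs_of_nonneg hnn]
    exact mul_le_mul_of_nonneg_left hge (abs_nonneg _)
  have key3 : ∀ i, |c i| ≤ specNorm R := fun i => dot_le_specNorm R (v i) (hunit i)
  -- Frobenius bound
  have hfrobE : frobSq E = ∑ i, ee i ^ 2 := frobSq_spectral E hE
  have hcsum : ∑ i, (c i) ^ 2 ≤ frobSq R := by
    have hdd : ∀ i, c i = (star (hE.eigenvectorUnitary : Matrix (Fin n) (Fin n) ℝ) * R
        * (hE.eigenvectorUnitary : Matrix (Fin n) (Fin n) ℝ)) i i :=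
      fun i => (conj_diag_entry E R hE i).symm
    calc ∑ i, (c i) ^ 2
        = ∑ i, ((star (hE.eigenvectorUnitary : Matrix (Fin n) (Fin n) ℝ) * R
          * (hE.eigenvectorUnitary : Matrix (Fin n) (Fin n) ℝ)) i i) ^ 2 := by
          apply Finset.sum_congr rfl; intro i _; rw [hdd i]
      _ ≤ frobSq (star (hE.eigenvectorUnitary : Matrix (Fin n) (Fin n) ℝ) * R
          * (hE.eigenvectorUnitary : Matrix (Fin n) (Fin n) ℝ)) := diag_sq_le_frobSq _
      _ = frobSq R := frobSq_conj _ (hE.eigenvectorUnitary).2 R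
  have he4 : ∑ i, (ee i ^ 2) ^ 2 ≤ ∑ i, (c i) ^ 2 := by
    apply Finset.sum_le_sum
    intro i _
    calc (ee i ^ 2) ^ 2 ≤ |c i| ^ 2 := by
          apply pow_le_pow_left₀ (sq_nonneg _) (key1 i)
      _ = (c i) ^ 2 := sq_abs _
  have hCS : (∑ i, ee i ^ 2) ^ 2 ≤ (n : ℝ) * ∑ i, (ee i ^ 2) ^ 2 := by
    have := Finset.sum_mul_sq_le_sq_mul_sq Finset.univ (fun _ : Fin n => (1 : ℝ))
      (fun i => ee i ^ 2)
    simpa using this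
  have hfrobR : frobSq R = frobNorm R ^ 2 := by
    rw [frobNorm_eq, Real.sq_sqrt (frobSq_nonneg R)]
  have main1 : frobSq E ≤ Real.sqrt n * frobNorm R := by
    have hsq : (frobSq E) ^ 2 ≤ (Real.sqrt n * frobNorm R) ^ 2 := by
      rw [mul_pow, Real.sq_sqrt (Nat.cast_nonneg n)]
      calc (frobSq E) ^ 2 = (∑ i, ee i ^ 2) ^ 2 := by rw [hfrobE]
        _ ≤ (n : ℝ) * ∑ i, (ee i ^ 2) ^ 2 := hCS
        _ ≤ (n : ℝ) * ∑ i, (c i) ^ 2 := by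
            apply mul_le_mul_of_nonneg_left he4 (Nat.cast_nonneg n)
        _ ≤ (n : ℝ) * frobSq R := mul_le_mul_of_nonneg_left hcsum (Nat.cast_nonneg n)
        _ = (n : ℝ) * frobNorm R ^ 2 := by rw [hfrobR]
    have := Real.sqrt_le_sqrt hsq
    rwa [Real.sqrt_sq (frobSq_nonneg E), Real.sqrt_sq (mul_nonneg (Real.sqrt_nonneg _) (frobNorm_eq R ▸ Real.sqrt_nonneg _))] at this
  have goal1 : frobNorm E ≤ Real.sqrt (Real.sqrt n * frobNorm R) := by
    rw [frobNorm_eq]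
    exact Real.sqrt_le_sqrt main1
  refine ⟨goal1, le_min ?_ (le_trans (specNorm_le_frobNorm E) goal1)⟩
  -- spectral bound via lambdaMin
  have hlampos : 0 < lambdaMin hM.1 := by
    obtain ⟨j, hj⟩ := Finite.exists_min hM.1.eigenvalues
    have h1' : hM.1.eigenvalues j ≤ lambdaMin hM.1 := le_ciInf hj
    exact lt_of_lt_of_le (hM.eigenvalues_pos j) h1'
  have hsq : 0 < Real.sqrt (lambdaMin hM.1) := Real.sqrt_pos.mpr hlampos
  apply specNorm_le_bound E hE _ (div_nonneg (specNorm_nonneg R) hsq.le)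
  intro i
  rw [le_div_iff₀ hsq]
  exact (key2 i).trans (key3 i)
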